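/- Define G(r,a,b) = r^{2σ₁}(1 + a r^{2(σ₂-σ₁)}) Γ₂(r,a,b). Then for all j, m ∈ ℕ, |∂^{j+m}/(∂aʲ ∂bᵐ) G(r,a,b)^{-1}| ≤ C r^{-2σ₁+2j(σ₂-σ₁)+2m(σ-2σ₁)} uniformly on (0,ε*] × [0,1]², and at (a,b)=(0,0) this derivative equals C_{j,m} r^{-2σ₁+2j(σ₂-σ₁)+2m(σ-2σ₁)} for some constant C_{j,m}. -/

import Mathlib

open Real Set

noncomputable def Gamma1 (σ₁ σ₂ r a : ℝ) : ℝ := (1 + a * r ^ (2*(σ₂-σ₁)))⁻¹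

noncomputable def Gamma2 (σ σ₁ σ₂ r a b : ℝ) : ℝ :=
  Real.sqrt (1 - 4*b*r ^ (2*(σ-2*σ₁)) * (Gamma1 σ₁ σ₂ r a)^2)

/-- Mixed partial derivative `∂^{j+m}/(∂aʲ ∂bᵐ)`. -/
noncomputable def pderiv2 (j m : ℕ) (f : ℝ → ℝ → ℝ) (a b : ℝ) : ℝ :=
  iteratedDeriv m (fun b' => iteratedDeriv j (fun a' => f a' b') a) b

noncomputable def lam1 (σ σ₁ σ₂ r a b : ℝ) : ℝ :=
  -2 * r ^ (2*(σ-σ₁)) * Gamma1 σ₁ σ₂ r a * (1 + Gamma2 σ σ₁ σ₂ r a b)⁻¹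

noncomputable def lam2 (σ σ₁ σ₂ r a b : ℝ) : ℝ :=
  -(r ^ (2*σ₁) / 2) * (1 + a * r ^ (2*(σ₂-σ₁))) * (1 + Gamma2 σ σ₁ σ₂ r a b)

noncomputable def Gfun (σ σ₁ σ₂ r a b : ℝ) : ℝ :=
  r ^ (2*σ₁) * (1 + a * r ^ (2*(σ₂-σ₁))) * Gamma2 σ σ₁ σ₂ r a b

namespace Stmt7Aux

abbrev Term := ℝ × ℕ × ℕ

noncomputable def tval (t : Term) (u w : ℝ) : ℝ := t.1 * u ^ t.2.1 * w ^ t.2.2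

noncomputable def lval (L : List Term) (u w : ℝ) : ℝ := (L.map (fun t => tval t u w)).sum

def dxT (t : Term) : List Term :=
  [((t.1 * t.2.1 : ℝ), t.2.1 - 1, t.2.2), (-(t.1 * t.2.2), t.2.1 + 1, t.2.2 + 2)]

def dyT (t : Term) : List Term := [((2 * t.1 * t.2.2 : ℝ), t.2.1, t.2.2 + 2)]

def dxL (L : List Term) : List Term := (L.map dxT).flatten
def dyL (L : List Term) : List Term := (L.map dyT).flatten

lemma lval_nil (u w : ℝ) : lval [] u w = 0 := rfl

lemma lval_cons (t : Term) (L : List Term) (u w : ℝ) :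
    lval (t :: L) u w = tval t u w + lval L u w := by simp [lval]

lemma lval_append (L1 L2 : List Term) (u w : ℝ) :
    lval (L1 ++ L2) u w = lval L1 u w + lval L2 u w := by simp [lval]

lemma dxL_nil : dxL [] = [] := rfl
lemma dyL_nil : dyL [] = [] := rfl

lemma dxL_cons (t : Term) (L : List Term) : dxL (t :: L) = dxT t ++ dxL L := by
  simp [dxL]

lemma dyL_cons (t : Term) (L : List Term) : dyL (t :: L) = dyT t ++ dyL L := by
  simp [dyL]

/-- `u` = `1 + x ρ`. -/
def Uf (ρ x : ℝ) : ℝ := 1 + x * ρ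

/-- `s` = `(1+xρ)² - 4 y τ`. -/
def Sf (ρ τ x y : ℝ) : ℝ := (1 + x * ρ)^2 - 4*(y*τ)

/-- `w` = `(√s)⁻¹`. -/
noncomputable def Wf (ρ τ x y : ℝ) : ℝ := (Real.sqrt (Sf ρ τ x y))⁻¹

lemma hasDerivAt_U (ρ x : ℝ) : HasDerivAt (fun x' => Uf ρ x') ρ x := by
  simpa [Uf] using ((hasDerivAt_id x).mul_const ρ).const_add 1

lemma hasDerivAt_Wx (ρ τ x y : ℝ) (hs : 0 < Sf ρ τ x y) :
    HasDerivAt (fun x' => Wf ρ τ x' y) (-(ρ * Uf ρ x * (Wf ρ τ x y)^3)) x := by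
  have hsq : 0 < Real.sqrt (Sf ρ τ x y) := Real.sqrt_pos.mpr hs
  have hS : HasDerivAt (fun x' => Sf ρ τ x' y) (2 * Uf ρ x * ρ) x := by
    have h := ((hasDerivAt_U ρ x).pow 2).sub_const (4*(y*τ))
    simpa [Sf, Uf] using h
  have hsqrt : HasDerivAt (fun x' => Real.sqrt (Sf ρ τ x' y))
      (1/(2*Real.sqrt (Sf ρ τ x y)) * (2 * Uf ρ x * ρ)) x :=
    (Real.hasDerivAt_sqrt hs.ne').comp x hS
  have hW := hsqrt.inv hsq.ne'
  convert hW using 1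
  rfl
  rfl
  rfl
  rw [Wf]
  field_simp

lemma hasDerivAt_Wy (ρ τ x y : ℝ) (hs : 0 < Sf ρ τ x y) :
    HasDerivAt (fun y' => Wf ρ τ x y') (τ * (2 * (Wf ρ τ x y)^3)) y := by
  have hsq : 0 < Real.sqrt (Sf ρ τ x y) := Real.sqrt_pos.mpr hs
  have hS : HasDerivAt (fun y' => Sf ρ τ x y') (-(4*τ)) y := by
    have h := (((hasDerivAt_id y).mul_const τ).const_mul 4).const_sub ((1 + x*ρ)^2)
    simpa [Sf] using h
  have hsqrt : HasDerivAt (fun y' => Real.sqrt (Sf ρ τ x y'))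
      (1/(2*Real.sqrt (Sf ρ τ x y)) * (-(4*τ))) y :=
    (Real.hasDerivAt_sqrt hs.ne').comp y hS
  have hW := hsqrt.inv hsq.ne'
  convert hW using 1
  rfl
  rfl
  rfl
  rw [Wf]
  field_simp
  ring

lemma term_x (ρ τ : ℝ) (t : Term) (x y : ℝ) (hs : 0 < Sf ρ τ x y) :
    HasDerivAt (fun x' => tval t (Uf ρ x') (Wf ρ τ x' y))
      (ρ * lval (dxT t) (Uf ρ x) (Wf ρ τ x y)) x := by
  obtain ⟨c, n, q⟩ := t
  have hU := hasDerivAt_U ρ x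
  have hW := hasDerivAt_Wx ρ τ x y hs
  have h := ((hU.pow n).const_mul c).mul (hW.pow q)
  convert h using 1
  rfl
  rfl
  rfl
  simp only [dxT, lval_cons, lval_nil, tval]
  cases q with
  | zero => simp; ring
  | succ qq =>
    simp only [Nat.add_sub_cancel, Pi.pow_apply]
    push_cast
    ring

lemma term_y (ρ τ : ℝ) (t : Term) (x y : ℝ) (hs : 0 < Sf ρ τ x y) :
    HasDerivAt (fun y' => tval t (Uf ρ x) (Wf ρ τ x y'))
      (τ * lval (dyT t) (Uf ρ x) (Wf ρ τ x y)) y := by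
  obtain ⟨c, n, q⟩ := t
  have hW := hasDerivAt_Wy ρ τ x y hs
  have h := (hW.pow q).const_mul (c * (Uf ρ x) ^ n)
  have h2 : HasDerivAt (fun y' => tval (c, n, q) (Uf ρ x) (Wf ρ τ x y'))
      (c * (Uf ρ x)^n * (↑q * Wf ρ τ x y ^ (q-1) * (τ * (2 * (Wf ρ τ x y)^3)))) y := by
    simpa [tval, mul_assoc] using h
  convert h2 using 1
  simp only [dyT, lval_cons, lval_nil, tval]
  cases q with
  | zero => simp
  | succ qq =>
    simp only [Nat.add_sub_cancel]
    push_cast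
    ring

lemma list_x (ρ τ : ℝ) (L : List Term) (x y : ℝ) (hs : 0 < Sf ρ τ x y) :
    HasDerivAt (fun x' => lval L (Uf ρ x') (Wf ρ τ x' y))
      (ρ * lval (dxL L) (Uf ρ x) (Wf ρ τ x y)) x := by
  induction L with
  | nil => simpa [lval_nil, dxL_nil] using hasDerivAt_const x (0:ℝ)
  | cons t L ih =>
    have h := (term_x ρ τ t x y hs).add ih
    have he : ρ * lval (dxL (t :: L)) (Uf ρ x) (Wf ρ τ x y)
        = ρ * lval (dxT t) (Uf ρ x) (Wf ρ τ x y) + ρ * lval (dxL L) (Uf ρ x) (Wf ρ τ x y) := by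
      rw [dxL_cons, lval_append]; ring
    rw [he]
    exact HasDerivAt.congr_deriv (by simp only [lval_cons]; exact h) rfl

lemma list_y (ρ τ : ℝ) (L : List Term) (x y : ℝ) (hs : 0 < Sf ρ τ x y) :
    HasDerivAt (fun y' => lval L (Uf ρ x) (Wf ρ τ x y'))
      (τ * lval (dyL L) (Uf ρ x) (Wf ρ τ x y)) y := by
  induction L with
  | nil => simpa [lval_nil, dyL_nil] using hasDerivAt_const y (0:ℝ)
  | cons t L ih =>
    have h := (term_y ρ τ t x y hs).add ih
    have he : τ * lval (dyL (t :: L)) (Uf ρ x) (Wf ρ τ x y)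
        = τ * lval (dyT t) (Uf ρ x) (Wf ρ τ x y) + τ * lval (dyL L) (Uf ρ x) (Wf ρ τ x y) := by
      rw [dyL_cons, lval_append]; ring
    rw [he]
    exact HasDerivAt.congr_deriv (by simp only [lval_cons]; exact h) rfl

lemma itd_congr : ∀ (n : ℕ) (f g : ℝ → ℝ) (x : ℝ), f =ᶠ[nhds x] g →
    iteratedDeriv n f x = iteratedDeriv n g x := by
  intro n
  induction n with
  | zero => intro f g x h; simpa using h.self_of_nhds
  | succ n ih =>
    intro f g x h
    rw [iteratedDeriv_succ, iteratedDeriv_succ]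
    apply Filter.EventuallyEq.deriv_eq
    filter_upwards [h.eventuallyEq_nhds] with y hy using ih f g y hy

lemma contU (ρ : ℝ) : Continuous (fun x' => Uf ρ x') := by
  unfold Uf; continuity

lemma contSx (ρ τ y : ℝ) : Continuous (fun x' => Sf ρ τ x' y) := by
  unfold Sf; continuity

lemma contSy (ρ τ x : ℝ) : Continuous (fun y' => Sf ρ τ x y') := by
  unfold Sf; continuity

lemma itd_x (ρ τ : ℝ) (j : ℕ) :
    ∀ (c y x : ℝ), 0 < Uf ρ x → 0 < Sf ρ τ x y →
    iteratedDeriv j (fun x' => c * Wf ρ τ x' y) x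
      = c * ρ^j * lval (dxL^[j] [(1,0,1)]) (Uf ρ x) (Wf ρ τ x y) := by
  induction j with
  | zero =>
    intro c y x hu hs
    simp [lval_cons, lval_nil, tval]
  | succ j ih =>
    intro c y x hu hs
    rw [iteratedDeriv_succ]
    have hopen : IsOpen {x' : ℝ | 0 < Uf ρ x' ∧ 0 < Sf ρ τ x' y} := by
      rw [Set.setOf_and]
      exact (isOpen_lt continuous_const (contU ρ)).inter
        (isOpen_lt continuous_const (contSx ρ τ y))
    have hev : (fun x' => iteratedDeriv j (fun x'' => c * Wf ρ τ x'' y) x')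
        =ᶠ[nhds x] (fun x' => (c * ρ^j) * lval (dxL^[j] [(1,0,1)]) (Uf ρ x') (Wf ρ τ x' y)) := by
      filter_upwards [hopen.mem_nhds ⟨hu, hs⟩] with x' hx'
      rw [ih c y x' hx'.1 hx'.2]
    rw [hev.deriv_eq]
    rw [((list_x ρ τ (dxL^[j] [(1,0,1)]) x y hs).const_mul (c * ρ^j)).deriv]
    rw [Function.iterate_succ_apply']
    ring

lemma itd_y (ρ τ : ℝ) (m : ℕ) :
    ∀ (L : List Term) (c x b : ℝ), 0 < Sf ρ τ x b →
    iteratedDeriv m (fun y' => c * lval L (Uf ρ x) (Wf ρ τ x y')) b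
      = c * τ^m * lval (dyL^[m] L) (Uf ρ x) (Wf ρ τ x b) := by
  induction m with
  | zero =>
    intro L c x b hs
    simp
  | succ m ih =>
    intro L c x b hs
    rw [iteratedDeriv_succ]
    have hopen : IsOpen {b' : ℝ | 0 < Sf ρ τ x b'} :=
      isOpen_lt continuous_const (contSy ρ τ x)
    have hev : (fun b' => iteratedDeriv m (fun y' => c * lval L (Uf ρ x) (Wf ρ τ x y')) b')
        =ᶠ[nhds b] (fun b' => (c * τ^m) * lval (dyL^[m] L) (Uf ρ x) (Wf ρ τ x b')) := by
      filter_upwards [hopen.mem_nhds hs] with b' hb'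
      rw [ih L c x b' hb']
    rw [hev.deriv_eq]
    rw [((list_y ρ τ (dyL^[m] L) x b hs).const_mul (c * τ^m)).deriv]
    rw [Function.iterate_succ_apply']
    ring

lemma lval_bound (Uu Ww : ℝ) : ∀ (L : List Term) (u w : ℝ), 0 ≤ u → u ≤ Uu → 0 ≤ w → w ≤ Ww →
    |lval L u w| ≤ lval (L.map fun t => ((|t.1|, t.2) : Term)) Uu Ww := by
  intro L
  induction L with
  | nil => intro u w _ _ _ _; simp [lval]
  | cons t L ih =>
    intro u w h1 h2 h3 h4
    rw [List.map_cons, lval_cons, lval_cons]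
    refine le_trans (abs_add_le _ _) (add_le_add ?_ (ih u w h1 h2 h3 h4))
    obtain ⟨c, n, q⟩ := t
    simp only [tval]
    rw [abs_mul, abs_mul, abs_pow, abs_pow, abs_of_nonneg h1, abs_of_nonneg h3]
    have hU0 : 0 ≤ Uu := le_trans h1 h2
    have hW0 : 0 ≤ Ww := le_trans h3 h4
    exact mul_le_mul (mul_le_mul_of_nonneg_left (pow_le_pow_left₀ h1 h2 n) (abs_nonneg c))
      (pow_le_pow_left₀ h3 h4 q) (pow_nonneg h3 q)
      (mul_nonneg (abs_nonneg c) (pow_nonneg hU0 n))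

end Stmt7Aux

open Stmt7Aux in
theorem stmt7 (σ σ₁ σ₂ εs γ₀ : ℝ) (hσ : 1 ≤ σ) (hσ₁ : 0 ≤ σ₁) (h12 : σ₁ < σ / 2)
    (h22 : σ / 2 < σ₂) (h2σ : σ₂ ≤ σ) (hε : 0 < εs) (hγ₀ : 0 < γ₀)
    (hΓ : ∀ r ∈ Set.Ioc (0:ℝ) εs, ∀ a ∈ Set.Icc (0:ℝ) 1, ∀ b ∈ Set.Icc (0:ℝ) 1,
      γ₀ ≤ Gamma2 σ σ₁ σ₂ r a b)
    (j m : ℕ) :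
    (∃ C > 0, ∀ r ∈ Set.Ioc (0:ℝ) εs, ∀ a ∈ Set.Icc (0:ℝ) 1, ∀ b ∈ Set.Icc (0:ℝ) 1,
      |pderiv2 j m (fun a' b' => (Gfun σ σ₁ σ₂ r a' b')⁻¹) a b|
        ≤ C * r ^ (-(2*σ₁) + 2*(j:ℝ)*(σ₂-σ₁) + 2*(m:ℝ)*(σ-2*σ₁))) ∧
    (∃ Cjm : ℝ, ∀ r ∈ Set.Ioc (0:ℝ) εs,
      pderiv2 j m (fun a' b' => (Gfun σ σ₁ σ₂ r a' b')⁻¹) 0 0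
        = Cjm * r ^ (-(2*σ₁) + 2*(j:ℝ)*(σ₂-σ₁) + 2*(m:ℝ)*(σ-2*σ₁))) := by
  have hσ₁₂ : σ₁ < σ₂ := lt_trans h12 h22
  -- key evaluation of the mixed derivative
  have key : ∀ r : ℝ, 0 < r → ∀ a b : ℝ,
      0 < Uf (r ^ (2*(σ₂-σ₁))) a →
      0 < Sf (r ^ (2*(σ₂-σ₁))) (r ^ (2*(σ-2*σ₁))) a b →
      pderiv2 j m (fun a' b' => (Gfun σ σ₁ σ₂ r a' b')⁻¹) a b
        = (r ^ (2*σ₁))⁻¹ * (r ^ (2*(σ₂-σ₁)))^j * (r ^ (2*(σ-2*σ₁)))^m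
            * lval (dyL^[m] (dxL^[j] [(1,0,1)])) (Uf (r ^ (2*(σ₂-σ₁))) a)
              (Wf (r ^ (2*(σ₂-σ₁))) (r ^ (2*(σ-2*σ₁))) a b) := by
    intro r hr a b hu hs
    set ρ := r ^ (2*(σ₂-σ₁)) with hρdef
    set τ := r ^ (2*(σ-2*σ₁)) with hτdef
    have hA : ∀ a' b' : ℝ, 0 < Uf ρ a' →
        (Gfun σ σ₁ σ₂ r a' b')⁻¹ = (r ^ (2*σ₁))⁻¹ * Wf ρ τ a' b' := by
      intro a' b' hu'
      have hune : (1 + a' * ρ) ≠ 0 := by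
        have : 0 < 1 + a' * ρ := hu'
        exact this.ne'
      have h1 : Gfun σ σ₁ σ₂ r a' b' = r ^ (2*σ₁) * Real.sqrt (Sf ρ τ a' b') := by
        unfold Gfun Gamma2 Gamma1
        rw [← hρdef, ← hτdef]
        rw [show (1:ℝ) - 4*b'*τ * ((1 + a'*ρ)⁻¹)^2
              = Sf ρ τ a' b' * (((1 + a'*ρ)^2)⁻¹) by
            rw [Sf]; field_simp]
        have hu'' : (0:ℝ) ≤ 1 + a' * ρ := le_of_lt hu'
        rw [Real.sqrt_mul' _ (inv_nonneg.mpr (sq_nonneg _)), Real.sqrt_inv,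
          Real.sqrt_sq hu'']
        field_simp
      rw [h1, mul_inv]
      rfl
    unfold pderiv2
    have hinner : ∀ b', 0 < Sf ρ τ a b' →
        iteratedDeriv j (fun a' => (Gfun σ σ₁ σ₂ r a' b')⁻¹) a
          = ((r ^ (2*σ₁))⁻¹ * ρ^j) * lval (dxL^[j] [(1,0,1)]) (Uf ρ a) (Wf ρ τ a b') := by
      intro b' hs'
      have h1 : iteratedDeriv j (fun a' => (Gfun σ σ₁ σ₂ r a' b')⁻¹) a
          = iteratedDeriv j (fun a' => (r ^ (2*σ₁))⁻¹ * Wf ρ τ a' b') a := by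
        apply itd_congr
        have hopen : IsOpen {a' : ℝ | 0 < Uf ρ a'} :=
          isOpen_lt continuous_const (contU ρ)
        filter_upwards [hopen.mem_nhds hu] with a' ha' using hA a' b' ha'
      rw [h1, itd_x ρ τ j _ b' a hu hs']
    have houter : (fun b' => iteratedDeriv j (fun a' => (Gfun σ σ₁ σ₂ r a' b')⁻¹) a)
        =ᶠ[nhds b] (fun b' => ((r ^ (2*σ₁))⁻¹ * ρ^j)
            * lval (dxL^[j] [(1,0,1)]) (Uf ρ a) (Wf ρ τ a b')) := by
      have hopen : IsOpen {b' : ℝ | 0 < Sf ρ τ a b'} :=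
        isOpen_lt continuous_const (contSy ρ τ a)
      filter_upwards [hopen.mem_nhds hs] with b' hb' using hinner b' hb'
    rw [itd_congr m _ _ b houter, itd_y ρ τ m _ _ a b hs]
  -- exponent arithmetic
  have hexp : ∀ r : ℝ, 0 < r →
      (r ^ (2*σ₁))⁻¹ * (r ^ (2*(σ₂-σ₁)))^j * (r ^ (2*(σ-2*σ₁)))^m
        = r ^ (-(2*σ₁) + 2*(j:ℝ)*(σ₂-σ₁) + 2*(m:ℝ)*(σ-2*σ₁)) := by
    intro r hr
    rw [← Real.rpow_neg hr.le, ← Real.rpow_natCast (r ^ (2*(σ₂-σ₁))) j,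
      ← Real.rpow_natCast (r ^ (2*(σ-2*σ₁))) m, ← Real.rpow_mul hr.le,
      ← Real.rpow_mul hr.le, ← Real.rpow_add hr, ← Real.rpow_add hr]
    congr 1
    ring
  constructor
  · -- uniform bound
    set L := dyL^[m] (dxL^[j] ([(1,0,1)] : List Term)) with hLdef
    set B := lval (L.map fun t => ((|t.1|, t.2) : Term)) (1 + εs ^ (2*(σ₂-σ₁))) γ₀⁻¹ with hBdef
    refine ⟨|B| + 1, by positivity, ?_⟩
    rintro r ⟨hr, hrε⟩ a ha b hb
    set ρ := r ^ (2*(σ₂-σ₁)) with hρdef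
    set τ := r ^ (2*(σ-2*σ₁)) with hτdef
    have hρpos : 0 < ρ := Real.rpow_pos_of_pos hr _
    have hτpos : 0 < τ := Real.rpow_pos_of_pos hr _
    have hu1 : (1:ℝ) ≤ Uf ρ a := by
      unfold Uf; nlinarith [ha.1, hρpos]
    have hu : 0 < Uf ρ a := lt_of_lt_of_le one_pos hu1
    have hune : Uf ρ a ≠ 0 := hu.ne'
    have hγ2 : γ₀^2 ≤ 1 - 4*b*τ * ((Uf ρ a)⁻¹)^2 := by
      have hg := hΓ r ⟨hr, hrε⟩ a ha b hb
      unfold Gamma2 Gamma1 at hg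
      rw [← hρdef, ← hτdef] at hg
      exact (Real.le_sqrt' hγ₀).mp hg
    have hSeq : Sf ρ τ a b = (Uf ρ a)^2 * (1 - 4*b*τ * ((Uf ρ a)⁻¹)^2) := by
      rw [Sf, Uf]; rw [Uf] at hune; field_simp
    have hsS : γ₀^2 ≤ Sf ρ τ a b := by
      rw [hSeq]
      have h1 : (1:ℝ) ≤ (Uf ρ a)^2 := by nlinarith
      have h2 := mul_le_mul h1 hγ2 (sq_nonneg γ₀) (sq_nonneg (Uf ρ a))
      linarith
    have hS : 0 < Sf ρ τ a b := lt_of_lt_of_le (by positivity) hsS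
    rw [key r hr a b hu hS]
    have hw0 : 0 ≤ Wf ρ τ a b := by
      rw [Wf]; positivity
    have hwW : Wf ρ τ a b ≤ γ₀⁻¹ := by
      rw [Wf]
      have h1 : γ₀ ≤ Real.sqrt (Sf ρ τ a b) := by
        rw [show γ₀ = Real.sqrt (γ₀^2) by rw [Real.sqrt_sq hγ₀.le]]
        exact Real.sqrt_le_sqrt hsS
      gcongr
    have huU : Uf ρ a ≤ 1 + εs ^ (2*(σ₂-σ₁)) := by
      have hρle : ρ ≤ εs ^ (2*(σ₂-σ₁)) :=
        Real.rpow_le_rpow hr.le hrε (by linarith)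
      unfold Uf
      nlinarith [ha.1, ha.2, hρpos]
    have hlb := lval_bound (1 + εs ^ (2*(σ₂-σ₁))) γ₀⁻¹ L (Uf ρ a) (Wf ρ τ a b)
      (le_trans zero_le_one hu1) huU hw0 hwW
    have hval : |lval L (Uf ρ a) (Wf ρ τ a b)| ≤ |B| + 1 := by
      have : B ≤ |B| := le_abs_self B
      rw [← hBdef] at hlb
      linarith
    have hcpos : 0 < (r ^ (2*σ₁))⁻¹ * ρ^j * τ^m := by
      have := Real.rpow_pos_of_pos hr (2*σ₁)
      positivity
    rw [abs_mul]
    calc |(r ^ (2*σ₁))⁻¹ * ρ^j * τ^m| * |lval L (Uf ρ a) (Wf ρ τ a b)|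
        ≤ |(r ^ (2*σ₁))⁻¹ * ρ^j * τ^m| * (|B| + 1) := by
          apply mul_le_mul_of_nonneg_left hval (abs_nonneg _)
      _ = (|B| + 1) * r ^ (-(2*σ₁) + 2*(j:ℝ)*(σ₂-σ₁) + 2*(m:ℝ)*(σ-2*σ₁)) := by
          rw [abs_of_pos hcpos, hexp r hr]; ring
  · -- value at (0,0)
    refine ⟨lval (dyL^[m] (dxL^[j] ([(1,0,1)] : List Term))) 1 1, ?_⟩
    rintro r ⟨hr, hrε⟩
    have hu : 0 < Uf (r ^ (2*(σ₂-σ₁))) 0 := by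
      unfold Uf; norm_num
    have hS : 0 < Sf (r ^ (2*(σ₂-σ₁))) (r ^ (2*(σ-2*σ₁))) 0 0 := by
      unfold Sf; norm_num
    rw [key r hr 0 0 hu hS]
    have hU1 : Uf (r ^ (2*(σ₂-σ₁))) 0 = 1 := by unfold Uf; norm_num
    have hW1 : Wf (r ^ (2*(σ₂-σ₁))) (r ^ (2*(σ-2*σ₁))) 0 0 = 1 := by
      unfold Wf Sf; norm_num
    rw [hU1, hW1]
    rw [show (r ^ (2*σ₁))⁻¹ * (r ^ (2*(σ₂-σ₁)))^j * (r ^ (2*(σ-2*σ₁)))^m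
          * lval (dyL^[m] (dxL^[j] [(1,0,1)])) 1 1
        = lval (dyL^[m] (dxL^[j] [(1,0,1)])) 1 1
          * ((r ^ (2*σ₁))⁻¹ * (r ^ (2*(σ₂-σ₁)))^j * (r ^ (2*(σ-2*σ₁)))^m) by ring]
    rw [hexp r hr]
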